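/- Let H be a complex Hilbert space and let B : H × H → ℂ be a bounded sesquilinear form (linear in the first argument, conjugate-linear in the second, with |B(u,v)| ≤ M‖u‖‖v‖ for some M > 0). Assume B satisfies a Gårding inequality: there exist a compact operator K : H → H and α > 0 such that α‖v‖² ≤ Re B(v,v) + Re⟨K v, v⟩ for all v ∈ H. If B is nondegenerate in its first argument (i.e., B(u,v) = 0 for all v ∈ H implies u = 0), then there exists γ > 0 such that for every u ∈ H, sup over nonzero v ∈ H of |B(u,v)|/‖v‖ is at least γ‖u‖ (the inf-sup condition holds). -/

import Mathlib

/-- Gårding inequality plus nondegeneracy (uniqueness) implies the inf-sup condition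
for a bounded sesquilinear form on a complex Hilbert space. -/
theorem garding_nondegenerate_infsup
    {H : Type*} [NormedAddCommGroup H] [InnerProductSpace ℂ H] [CompleteSpace H]
    (B : H → H → ℂ)
    -- sesquilinear: linear in the first argument, conjugate-linear in the second
    (hadd₁ : ∀ u₁ u₂ v : H, B (u₁ + u₂) v = B u₁ v + B u₂ v)
    (hsmul₁ : ∀ (a : ℂ) (u v : H), B (a • u) v = a * B u v)
    (hadd₂ : ∀ u v₁ v₂ : H, B u (v₁ + v₂) = B u v₁ + B u v₂)
    (hsmul₂ : ∀ (a : ℂ) (u v : H), B u (a • v) = (starRingEnd ℂ) a * B u v)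
    -- boundedness
    (M : ℝ) (hM : 0 < M)
    (hbound : ∀ u v : H, ‖B u v‖ ≤ M * ‖u‖ * ‖v‖)
    -- Gårding inequality with a compact operator K
    (K : H →L[ℂ] H) (hK : IsCompactOperator K)
    (α : ℝ) (hα : 0 < α)
    (hgarding : ∀ v : H, α * ‖v‖ ^ 2 ≤ (B v v).re + (inner ℂ (K v) v : ℂ).re)
    -- nondegeneracy in the first argument
    (hnd : ∀ u : H, (∀ v : H, B u v = 0) → u = 0) :
    ∃ γ > 0, ∀ u : H,
      γ * ‖u‖ ≤ sSup {r : ℝ | ∃ v : H, v ≠ 0 ∧ r = ‖B u v‖ / ‖v‖} := by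
  classical
  -- the Riesz representative of `v ↦ conj (B u v)`
  have fdef : ∀ u : H, ∃ f : H →L[ℂ] ℂ, (∀ v, f v = starRingEnd ℂ (B u v)) ∧ ‖f‖ ≤ M * ‖u‖ := by
    intro u
    refine ⟨LinearMap.mkContinuous
      { toFun := fun v => starRingEnd ℂ (B u v)
        map_add' := fun v₁ v₂ => by simp only [hadd₂, map_add]
        map_smul' := fun a v => by
          simp only [hsmul₂, map_mul, RingHom.id_apply, RingHomCompTriple.comp_apply,
            starRingEnd_self_apply, smul_eq_mul] }
      (M * ‖u‖) (fun v => by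
        simpa [mul_assoc] using hbound u v), fun v => rfl, ?_⟩
    exact LinearMap.mkContinuous_norm_le _ (by positivity) _
  choose f hf hfnorm using fdef
  have hT0 : ∀ u v : H, (inner ℂ v ((InnerProductSpace.toDual ℂ H).symm (f u)) : ℂ) = B u v := by
    intro u v
    rw [← inner_conj_symm, InnerProductSpace.toDual_symm_apply, hf]
    simp
  -- the operator T with B u v = ⟪v, T u⟫
  obtain ⟨T, hTdef⟩ : ∃ T : H →L[ℂ] H,
      ∀ u, T u = (InnerProductSpace.toDual ℂ H).symm (f u) := by
    refine ⟨LinearMap.mkContinuous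
      { toFun := fun u => (InnerProductSpace.toDual ℂ H).symm (f u)
        map_add' := fun u₁ u₂ => ?_
        map_smul' := fun a u => ?_ }
      M (fun u => ?_), fun u => rfl⟩
    · apply ext_inner_left ℂ
      intro v
      rw [inner_add_right, hT0, hT0, hT0, hadd₁]
    · apply ext_inner_left ℂ
      intro v
      rw [RingHom.id_apply, inner_smul_right, hT0, hT0, hsmul₁]
    · simpa using (hfnorm u).trans_eq (by ring)
  have hT : ∀ u v : H, (inner ℂ v (T u) : ℂ) = B u v := by
    intro u v; rw [hTdef]; exact hT0 u v
  -- T bounded: ‖T u‖ ≤ M * ‖u‖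
  have hTnorm : ∀ u : H, ‖T u‖ ≤ M * ‖u‖ := by
    intro u
    rw [hTdef]
    simpa using hfnorm u
  -- the coercive operator G = T + K
  set G : H →L[ℂ] H := T + K with hG
  have hGre : ∀ v : H, α * ‖v‖ ^ 2 ≤ (inner ℂ (G v) v : ℂ).re := by
    intro v
    have h1 : (B v v).re = (inner ℂ (T v) v : ℂ).re := by
      rw [← hT v v, ← inner_conj_symm, Complex.conj_re]
    have := hgarding v
    rw [h1] at this
    simpa [hG, inner_add_left] using this
  have hGcoer : ∀ v : H, α * ‖v‖ ^ 2 ≤ ‖G v‖ * ‖v‖ := by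
    intro v
    calc α * ‖v‖ ^ 2 ≤ (inner ℂ (G v) v : ℂ).re := hGre v
      _ ≤ ‖(inner ℂ (G v) v : ℂ)‖ := Complex.re_le_norm _
      _ ≤ ‖G v‖ * ‖v‖ := norm_inner_le_norm _ _
  have hGlow : ∀ v : H, α * ‖v‖ ≤ ‖G v‖ := by
    intro v
    rcases eq_or_ne v 0 with rfl | hv
    · simp
    · have hv' : 0 < ‖v‖ := norm_pos_iff.mpr hv
      have := hGcoer v
      rw [pow_two, ← mul_assoc] at this
      exact le_of_mul_le_mul_right this hv'
  -- G is bijective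
  have hGanti : AntilipschitzWith (⟨α⁻¹, by positivity⟩ : NNReal) G := by
    apply ContinuousLinearMap.antilipschitz_of_bound
    intro x
    have := hGlow x
    show ‖x‖ ≤ α⁻¹ * ‖G x‖
    calc ‖x‖ = α⁻¹ * (α * ‖x‖) := by field_simp
      _ ≤ α⁻¹ * ‖G x‖ := mul_le_mul_of_nonneg_left this (by positivity)
  have hGinj : Function.Injective G := hGanti.injective
  have hGclosed : IsClosed (Set.range G) := hGanti.isClosed_range G.uniformContinuous
  have hGsurj : Function.Surjective G := by
    have hrange : (LinearMap.range (G : H →ₗ[ℂ] H) : Submodule ℂ H) = ⊤ := by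
      have hcl : IsClosed ((LinearMap.range (G : H →ₗ[ℂ] H) : Submodule ℂ H) : Set H) := by
        simpa [LinearMap.coe_range] using hGclosed
      have : CompleteSpace (LinearMap.range (G : H →ₗ[ℂ] H) : Submodule ℂ H) := hcl.completeSpace_coe
      rw [← Submodule.orthogonal_eq_bot_iff]
      rw [Submodule.eq_bot_iff]
      intro w hw
      have hw' : (inner ℂ (G w) w : ℂ) = 0 :=
        hw (G w) (LinearMap.mem_range_self _ w)
      have h0 : α * ‖w‖ ^ 2 ≤ 0 := by
        have := hGre w
        rwa [hw', Complex.zero_re] at this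
      by_contra hw0
      have hpos : 0 < ‖w‖ := norm_pos_iff.mpr hw0
      nlinarith [mul_pos hα (pow_pos hpos 2)]
    exact LinearMap.range_eq_top.mp hrange
  -- G as a continuous linear equivalence
  let E : H ≃L[ℂ] H := ContinuousLinearEquiv.ofBijective G
    ((LinearMap.ker_eq_bot (f := (G : H →ₗ[ℂ] H))).mpr hGinj) (LinearMap.range_eq_top.mpr hGsurj)
  have hE : ∀ x : H, E x = G x := fun x => rfl
  -- T is bounded below
  have key : ∃ c > 0, ∀ u : H, c * ‖u‖ ≤ ‖T u‖ := by
    by_contra hcon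
    push_neg at hcon
    have hseq : ∀ n : ℕ, ∃ w : H, ‖w‖ = 1 ∧ ‖T w‖ < 1 / (n + 1) := by
      intro n
      obtain ⟨u, hu⟩ := hcon (1 / (n + 1)) (by positivity)
      have hu' : ‖T u‖ < (1 / (n + 1)) * ‖u‖ := hu
      have hune : u ≠ 0 := by
        rintro rfl
        simp only [map_zero, norm_zero, mul_zero] at hu'
        exact lt_irrefl 0 hu'
      have hnpos : (0 : ℝ) < ‖u‖ := norm_pos_iff.mpr hune
      refine ⟨((‖u‖ : ℂ))⁻¹ • u, ?_, ?_⟩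
      · rw [norm_smul, norm_inv, Complex.norm_real, norm_norm, inv_mul_cancel₀ hnpos.ne']
      · rw [map_smul, norm_smul, norm_inv, Complex.norm_real, norm_norm]
        calc ‖u‖⁻¹ * ‖T u‖ < ‖u‖⁻¹ * ((1 / (n + 1)) * ‖u‖) := by
              exact mul_lt_mul_of_pos_left hu' (by positivity)
          _ = 1 / (n + 1) := by field_simp
    choose w hw1 hw2 using hseq
    have hcpt : IsCompact (closure (⇑K '' Metric.closedBall 0 1)) :=
      hK.isCompact_closure_image_of_bounded (Metric.isBounded_closedBall)
    have hmemK : ∀ n : ℕ, K (w n) ∈ closure (⇑K '' Metric.closedBall 0 1) := fun n =>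
      subset_closure ⟨w n, by simp [Metric.mem_closedBall, dist_zero_right, hw1 n], rfl⟩
    obtain ⟨x, -, φ, hφ, hconv⟩ := hcpt.tendsto_subseq hmemK
    have hTconv : Filter.Tendsto (fun n => T (w (φ n))) Filter.atTop (nhds 0) := by
      rw [tendsto_zero_iff_norm_tendsto_zero]
      refine squeeze_zero (fun n => norm_nonneg _) (fun n => ?_)
        tendsto_one_div_add_atTop_nhds_zero_nat
      refine (hw2 (φ n)).le.trans ?_
      have h1 : (n : ℝ) + 1 ≤ (φ n : ℝ) + 1 := by
        have h0 : n ≤ φ n := hφ.le_apply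
        have : (n : ℝ) ≤ (φ n : ℝ) := Nat.cast_le.mpr h0
        linarith
      exact one_div_le_one_div_of_le (by positivity) h1
    have hGconv : Filter.Tendsto (fun n => G (w (φ n))) Filter.atTop (nhds x) := by
      have heq : (fun n => G (w (φ n))) = fun n => T (w (φ n)) + K (w (φ n)) := by
        funext n; simp [hG]
      rw [heq]
      simpa using hTconv.add hconv
    have hwconv : Filter.Tendsto (fun n => w (φ n)) Filter.atTop (nhds (E.symm x)) := by
      have heq : (fun n => w (φ n)) = fun n => E.symm (G (w (φ n))) := by
        funext n
        rw [← hE, ContinuousLinearEquiv.symm_apply_apply]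
      rw [heq]
      exact (E.symm.continuous.tendsto x).comp hGconv
    set u : H := E.symm x with hu
    have hnorm1 : ‖u‖ = 1 := by
      have h1 : Filter.Tendsto (fun n => ‖w (φ n)‖) Filter.atTop (nhds ‖u‖) :=
        (continuous_norm.tendsto u).comp hwconv
      have h2 : Filter.Tendsto (fun n => ‖w (φ n)‖) Filter.atTop (nhds 1) := by
        simpa [hw1] using tendsto_const_nhds (α := ℝ) (x := (1:ℝ)) (f := Filter.atTop (α := ℕ))
      exact tendsto_nhds_unique h1 h2
    have hTu : T u = 0 := by
      have h1 : Filter.Tendsto (fun n => T (w (φ n))) Filter.atTop (nhds (T u)) :=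
        (T.continuous.tendsto u).comp hwconv
      exact tendsto_nhds_unique h1 hTconv
    have : u = 0 := by
      apply hnd
      intro v
      rw [← hT u v, hTu, inner_zero_right]
    rw [this, norm_zero] at hnorm1
    exact zero_ne_one hnorm1
  obtain ⟨c, hc, hcl⟩ := key
  refine ⟨c, hc, fun u => ?_⟩
  rcases eq_or_ne u 0 with rfl | hune
  · simp only [norm_zero, mul_zero]
    apply Real.sSup_nonneg
    rintro r ⟨v, hv, rfl⟩
    positivity
  · have hupos : (0 : ℝ) < ‖u‖ := norm_pos_iff.mpr hune
    have hTu : T u ≠ 0 := by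
      intro h
      have h1 := hcl u
      rw [h, norm_zero] at h1
      nlinarith
    have hmem : ‖T u‖ ∈ {r : ℝ | ∃ v : H, v ≠ 0 ∧ r = ‖B u v‖ / ‖v‖} := by
      refine ⟨T u, hTu, ?_⟩
      have hni : ‖(inner ℂ (T u) (T u) : ℂ)‖ = ‖T u‖ * ‖T u‖ := by
        rw [inner_self_eq_norm_sq_to_K, norm_pow, RCLike.norm_ofReal, abs_norm, pow_two]
      rw [← hT u (T u), hni]
      field_simp
    have hbdd : BddAbove {r : ℝ | ∃ v : H, v ≠ 0 ∧ r = ‖B u v‖ / ‖v‖} := by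
      refine ⟨M * ‖u‖, ?_⟩
      rintro r ⟨v, hv, rfl⟩
      rw [div_le_iff₀ (norm_pos_iff.mpr hv)]
      exact hbound u v
    exact (hcl u).trans (le_csSup hbdd hmem)
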